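/- Backward recursion for the moment ratios: with R^n_{j,k} = det(U_k^r W^{j,n})/det(W^{j,n}), one has R^n_{j,k} = (m_{k+1} + γ_j R^n_{j+1,k+1})/(m₁ + γ_j R^n_{j+1,1}). -/

import Mathlib

open MeasureTheory

/-- The moment matrix `W^{j,n}` (here of size `s`, with subdiagonal entries
`-γ_start, -γ_{start+1}, …`), with first row `(m_{1+shift}, …, m_{s+shift})` and
Toeplitz moment entries `m_{k-i+1}` above the subdiagonal. `shift = k` gives `U_k^r W`. -/
noncomputable def Wgen (m γ : ℕ → ℝ) (shift start s : ℕ) : Matrix (Fin s) (Fin s) ℝ :=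
  Matrix.of fun i k =>
    if (i : ℕ) = 0 then m ((k : ℕ) + 1 + shift)
    else if (k : ℕ) + 1 = (i : ℕ) then -γ (start + (i : ℕ) - 1)
    else if (i : ℕ) ≤ (k : ℕ) then m ((k : ℕ) - (i : ℕ) + 1)
    else 0

noncomputable def Vgen (m γ : ℕ → ℝ) (x : ℝ) (shift start s : ℕ) : Matrix (Fin s) (Fin s) ℝ :=
  Matrix.of fun i k =>
    if (i : ℕ) = 0 then x ^ ((k : ℕ) + 1 + shift)
    else if (k : ℕ) + 1 = (i : ℕ) then -γ (start + (i : ℕ) - 1)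
    else if (i : ℕ) ≤ (k : ℕ) then m ((k : ℕ) - (i : ℕ) + 1)
    else 0

set_option linter.unnecessarySeqFocus false
set_option linter.unreachableTactic false
set_option linter.unusedTactic false

lemma wgen_minor0 (m γ : ℕ → ℝ) (t j n : ℕ) :
    (Wgen m γ t j (n+2)).submatrix (Fin.succAbove 0) Fin.succ = Wgen m γ 0 (j+1) (n+1) := by
  ext i k
  simp only [Matrix.submatrix_apply, Fin.succAbove_zero, Wgen, Matrix.of_apply, Fin.val_succ]
  split_ifs <;>
    first
      | rfl | omega | (exact (False.elim ‹False›)) | (exfalso; omega)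
      | (congr 1 <;> omega) | (congr 1; congr 1 <;> omega)

lemma wgen_minor1 (m γ : ℕ → ℝ) (t j n : ℕ) :
    (Wgen m γ t j (n+2)).submatrix (Fin.succAbove 1) Fin.succ = Wgen m γ (t+1) (j+1) (n+1) := by
  ext i k
  simp only [Matrix.submatrix_apply, Wgen, Matrix.of_apply, Fin.val_succ]
  rcases Nat.eq_zero_or_pos (i : ℕ) with h | h
  · have hs : ((Fin.succAbove (1 : Fin (n+2)) i) : ℕ) = 0 := by
      simp [Fin.succAbove, Fin.lt_def, h]
    rw [hs]
    split_ifs <;>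
      first
        | rfl | omega | (exact (False.elim ‹False›)) | (exfalso; omega)
        | (congr 1 <;> omega) | (congr 1; congr 1 <;> omega)
  · have hs : ((Fin.succAbove (1 : Fin (n+2)) i) : ℕ) = (i : ℕ) + 1 := by
      simp [Fin.succAbove, Fin.lt_def, Nat.not_lt.mpr h]
    rw [hs]
    split_ifs <;>
      first
        | rfl | omega | (exact (False.elim ‹False›)) | (exfalso; omega)
        | (congr 1 <;> omega) | (congr 1; congr 1 <;> omega)

lemma vgen_minor0 (m γ : ℕ → ℝ) (x : ℝ) (t j n : ℕ) :
    (Vgen m γ x t j (n+2)).submatrix (Fin.succAbove 0) Fin.succ = Wgen m γ 0 (j+1) (n+1) := by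
  ext i k
  simp only [Matrix.submatrix_apply, Fin.succAbove_zero, Vgen, Wgen, Matrix.of_apply, Fin.val_succ]
  split_ifs <;>
    first
      | rfl | omega | (exact (False.elim ‹False›)) | (exfalso; omega)
      | (congr 1 <;> omega) | (congr 1; congr 1 <;> omega)

lemma vgen_minor1 (m γ : ℕ → ℝ) (x : ℝ) (t j n : ℕ) :
    (Vgen m γ x t j (n+2)).submatrix (Fin.succAbove 1) Fin.succ = Vgen m γ x (t+1) (j+1) (n+1) := by
  ext i k
  simp only [Matrix.submatrix_apply, Vgen, Matrix.of_apply, Fin.val_succ]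
  rcases Nat.eq_zero_or_pos (i : ℕ) with h | h
  · have hs : ((Fin.succAbove (1 : Fin (n+2)) i) : ℕ) = 0 := by
      simp [Fin.succAbove, Fin.lt_def, h]
    rw [hs]
    split_ifs <;>
      first
        | rfl | omega | (exact (False.elim ‹False›)) | (exfalso; omega)
        | (congr 1 <;> omega) | (congr 1; congr 1 <;> omega)
  · have hs : ((Fin.succAbove (1 : Fin (n+2)) i) : ℕ) = (i : ℕ) + 1 := by
      simp [Fin.succAbove, Fin.lt_def, Nat.not_lt.mpr h]
    rw [hs]
    split_ifs <;>
      first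
        | rfl | omega | (exact (False.elim ‹False›)) | (exfalso; omega)
        | (congr 1 <;> omega) | (congr 1; congr 1 <;> omega)

lemma wgen_rec (m γ : ℕ → ℝ) (t j n : ℕ) :
    (Wgen m γ t j (n+2)).det
      = m (1+t) * (Wgen m γ 0 (j+1) (n+1)).det + γ j * (Wgen m γ (t+1) (j+1) (n+1)).det := by
  rw [Matrix.det_succ_column_zero, Fin.sum_univ_succ, Fin.sum_univ_succ]
  have htail : ∀ i : Fin n,
      ((-1 : ℝ)) ^ ((((i.succ).succ : Fin (n+2)) : ℕ)) *
        (Wgen m γ t j (n+2)) i.succ.succ 0 *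
        ((Wgen m γ t j (n+2)).submatrix (Fin.succAbove i.succ.succ) Fin.succ).det = 0 := by
    intro i
    have h0 : (Wgen m γ t j (n+2)) i.succ.succ 0 = 0 := by
      simp only [Wgen, Matrix.of_apply, Fin.val_succ, Fin.val_zero]
      split_ifs <;> first | rfl | (simp only [Fin.val_succ, Fin.val_zero] at * <;> omega)
    rw [h0]; ring
  rw [Finset.sum_eq_zero fun i _ => htail i]
  have h00 : (Wgen m γ t j (n+2)) 0 0 = m (1+t) := by
    simp only [Wgen, Matrix.of_apply, Fin.val_zero]
    norm_num
  have h10 : (Wgen m γ t j (n+2)) (Fin.succ 0) 0 = -γ j := by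
    simp only [Wgen, Matrix.of_apply, Fin.val_succ, Fin.val_zero]
    norm_num
  rw [h00, h10]
  rw [show (Fin.succAbove (0 : Fin (n+2))) = Fin.succAbove 0 from rfl]
  rw [wgen_minor0 m γ t j n]
  rw [show ((Fin.succ (0 : Fin (n+1)))) = (1 : Fin (n+2)) from rfl]
  rw [wgen_minor1 m γ t j n]
  simp
  try ring

lemma vgen_rec (m γ : ℕ → ℝ) (x : ℝ) (t j n : ℕ) :
    (Vgen m γ x t j (n+2)).det
      = x ^ (1+t) * (Wgen m γ 0 (j+1) (n+1)).det + γ j * (Vgen m γ x (t+1) (j+1) (n+1)).det := by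
  rw [Matrix.det_succ_column_zero, Fin.sum_univ_succ, Fin.sum_univ_succ]
  have htail : ∀ i : Fin n,
      ((-1 : ℝ)) ^ ((((i.succ).succ : Fin (n+2)) : ℕ)) *
        (Vgen m γ x t j (n+2)) i.succ.succ 0 *
        ((Vgen m γ x t j (n+2)).submatrix (Fin.succAbove i.succ.succ) Fin.succ).det = 0 := by
    intro i
    have h0 : (Vgen m γ x t j (n+2)) i.succ.succ 0 = 0 := by
      simp only [Vgen, Matrix.of_apply, Fin.val_succ, Fin.val_zero]
      split_ifs <;> first | rfl | (simp only [Fin.val_succ, Fin.val_zero] at * <;> omega)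
    rw [h0]; ring
  rw [Finset.sum_eq_zero fun i _ => htail i]
  have h00 : (Vgen m γ x t j (n+2)) 0 0 = x ^ (1+t) := by
    simp only [Vgen, Matrix.of_apply, Fin.val_zero]
    norm_num
  have h10 : (Vgen m γ x t j (n+2)) (Fin.succ 0) 0 = -γ j := by
    simp only [Vgen, Matrix.of_apply, Fin.val_succ, Fin.val_zero]
    norm_num
  rw [h00, h10]
  rw [show (Fin.succAbove (0 : Fin (n+2))) = Fin.succAbove 0 from rfl]
  rw [vgen_minor0 m γ x t j n]
  rw [show ((Fin.succ (0 : Fin (n+1)))) = (1 : Fin (n+2)) from rfl]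
  rw [vgen_minor1 m γ x t j n]
  simp
  try ring

lemma wgen_det_nonneg (m γ : ℕ → ℝ) (hm : ∀ k, 0 ≤ m k) (hγ : ∀ i, 0 < γ i) :
    ∀ n t j, 0 ≤ (Wgen m γ t j n).det := by
  intro n
  induction n using Nat.strong_induction_on with
  | _ n ih =>
    match n with
    | 0 => intro t j; simp [Matrix.det_fin_zero]
    | 1 =>
      intro t j
      rw [Matrix.det_fin_one]
      simpa [Wgen] using hm (1 + t)
    | (n+2) =>
      intro t j
      rw [wgen_rec]
      have h1 := ih (n+1) (by omega) 0 (j+1)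
      have h2 := ih (n+1) (by omega) (t+1) (j+1)
      exact add_nonneg (mul_nonneg (hm _) h1) (mul_nonneg (hγ j).le h2)

lemma vgen_det_nonneg (m γ : ℕ → ℝ) (hm : ∀ k, 0 ≤ m k) (hγ : ∀ i, 0 < γ i)
    (x : ℝ) (hx : 0 ≤ x) : ∀ n t j, 0 ≤ (Vgen m γ x t j n).det := by
  intro n
  induction n using Nat.strong_induction_on with
  | _ n ih =>
    match n with
    | 0 => intro t j; simp [Matrix.det_fin_zero]
    | 1 =>
      intro t j
      rw [Matrix.det_fin_one]
      simp only [Vgen, Matrix.of_apply, Fin.val_zero]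
      norm_num
      positivity
    | (n+2) =>
      intro t j
      rw [vgen_rec]
      have h1 := wgen_det_nonneg m γ hm hγ (n+1) 0 (j+1)
      have h2 := ih (n+1) (by omega) (t+1) (j+1)
      exact add_nonneg (mul_nonneg (by positivity) h1) (mul_nonneg (hγ j).le h2)

lemma vgen_det_pos (m γ : ℕ → ℝ) (hm : ∀ k, 0 ≤ m k) (hγ : ∀ i, 0 < γ i)
    (x : ℝ) (hx : 0 < x) : ∀ n t j, 0 < (Vgen m γ x t j (n+1)).det := by
  intro n
  induction n using Nat.strong_induction_on with
  | _ n ih =>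
    match n with
    | 0 =>
      intro t j
      rw [Matrix.det_fin_one]
      simp only [Vgen, Matrix.of_apply, Fin.val_zero]
      norm_num
      positivity
    | (n+1) =>
      intro t j
      rw [vgen_rec]
      have h1 := wgen_det_nonneg m γ hm hγ (n+1) 0 (j+1)
      have h2 := ih n (by omega) (t+1) (j+1)
      have h3 := hγ j
      have h4 : (0:ℝ) ≤ x ^ (1+t) * (Wgen m γ 0 (j+1) (n+1)).det :=
        mul_nonneg (by positivity) h1
      nlinarith

lemma vgen_det_continuous (m γ : ℕ → ℝ) (t j n : ℕ) :
    Continuous fun x : ℝ => (Vgen m γ x t j n).det := by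
  apply Continuous.matrix_det
  apply continuous_matrix
  intro i k
  simp only [Vgen, Matrix.of_apply]
  split_ifs <;> continuity

lemma ae_mem_Icc (Q : Measure ℝ) [IsProbabilityMeasure Q] (hQsupp : Q (Set.Icc 0 1) = 1) :
    ∀ᵐ x ∂Q, x ∈ Set.Icc (0:ℝ) 1 := by
  rw [ae_iff]
  exact (prob_compl_eq_zero_iff measurableSet_Icc).2 hQsupp

lemma integrable_of_cont (Q : Measure ℝ) [IsProbabilityMeasure Q]
    (hQsupp : Q (Set.Icc 0 1) = 1) (f : ℝ → ℝ) (hf : Continuous f) : Integrable f Q := by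
  obtain ⟨C, hC⟩ := (isCompact_Icc (a := (0:ℝ)) (b := 1)).exists_bound_of_continuousOn
    hf.continuousOn
  exact (integrable_const C).mono' hf.aestronglyMeasurable
    ((ae_mem_Icc Q hQsupp).mono fun x hx => hC x hx)

lemma wgen_eq_integral (Q : Measure ℝ) [IsProbabilityMeasure Q]
    (hQsupp : Q (Set.Icc 0 1) = 1) (m γ : ℕ → ℝ) (hm : ∀ k, m k = ∫ x, x ^ k ∂Q) :
    ∀ n, 1 ≤ n → ∀ t j, (Wgen m γ t j n).det = ∫ x, (Vgen m γ x t j n).det ∂Q := by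
  intro n
  induction n using Nat.strong_induction_on with
  | _ n ih =>
    match n with
    | 0 => intro h; exact absurd h (by omega)
    | 1 =>
      intro _ t j
      rw [Matrix.det_fin_one]
      have : ∀ x : ℝ, (Vgen m γ x t j 1).det = x ^ (0 + 1 + t) := by
        intro x
        rw [Matrix.det_fin_one]
        simp only [Vgen, Matrix.of_apply, Fin.val_zero]
        norm_num
      simp only [this]
      simp only [Wgen, Matrix.of_apply, Fin.val_zero]
      norm_num
      simpa using hm (1 + t)
    | (n+2) =>
      intro _ t j
      rw [wgen_rec, ih (n+1) (by omega) (by omega) (t+1) (j+1), hm (1+t)]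
      have hint1 : Integrable (fun x : ℝ => x ^ (1+t) * (Wgen m γ 0 (j+1) (n+1)).det) Q :=
        integrable_of_cont Q hQsupp _ (by continuity)
      have hint2 : Integrable (fun x : ℝ => γ j * (Vgen m γ x (t+1) (j+1) (n+1)).det) Q :=
        integrable_of_cont Q hQsupp _ (by
          exact (continuous_const.mul (vgen_det_continuous m γ (t+1) (j+1) (n+1))))
      rw [← integral_mul_const, ← integral_const_mul, ← integral_add hint1 hint2]
      exact integral_congr_ae (Filter.Eventually.of_forall fun x => (vgen_rec m γ x t j n).symm)

/-- Backward recursion for the moment ratios `Rⁿ_{j,k} = det(U_k^r W^{j,n})/det(W^{j,n})`: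
`Rⁿ_{j,k} = (m_{k+1} + γ_j Rⁿ_{j+1,k+1})/(m₁ + γ_j Rⁿ_{j+1,1})`. Here `W^{j,n}` has
size `s+2` and `W^{j+1,n}` has size `s+1`. -/
theorem stmt14 (Q : Measure ℝ) [IsProbabilityMeasure Q] (hQsupp : Q (Set.Icc 0 1) = 1)
    (m : ℕ → ℝ) (hm : ∀ k, m k = ∫ x, x ^ k ∂Q)
    (γ : ℕ → ℝ) (hγ : ∀ i, 0 < γ i)
    (j s k : ℕ) (hj : 1 ≤ j) (hk : 1 ≤ k) :
    (Wgen m γ k j (s + 2)).det / (Wgen m γ 0 j (s + 2)).det =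
      (m (k + 1) + γ j *
          ((Wgen m γ (k + 1) (j + 1) (s + 1)).det / (Wgen m γ 0 (j + 1) (s + 1)).det)) /
        (m 1 + γ j *
          ((Wgen m γ 1 (j + 1) (s + 1)).det / (Wgen m γ 0 (j + 1) (s + 1)).det)) := by
  have haeIcc := ae_mem_Icc Q hQsupp
  have hmnn : ∀ t, 0 ≤ m t := fun t => by
    rw [hm t]
    exact integral_nonneg_of_ae (haeIcc.mono fun x hx => pow_nonneg hx.1 t)
  set A := (Wgen m γ 0 (j+1) (s+1)).det with hAdef
  have hA0 : 0 ≤ A := wgen_det_nonneg m γ hmnn hγ (s+1) 0 (j+1)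
  rw [wgen_rec m γ k j s, wgen_rec m γ 0 j s]
  rcases hA0.lt_or_eq with hA | hA
  · -- A > 0
    have hAne : A ≠ 0 := ne_of_gt hA
    have h1 : m (k+1) + γ j * ((Wgen m γ (k+1) (j+1) (s+1)).det / A)
        = (m (1+k) * A + γ j * (Wgen m γ (k+1) (j+1) (s+1)).det) / A := by
      rw [add_div, mul_div_cancel_right₀ _ hAne, mul_div_assoc, Nat.add_comm 1 k]
    have h2 : m 1 + γ j * ((Wgen m γ 1 (j+1) (s+1)).det / A)
        = (m (1+0) * A + γ j * (Wgen m γ (0+1) (j+1) (s+1)).det) / A := by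
      rw [add_div, mul_div_cancel_right₀ _ hAne, mul_div_assoc]
    rw [h1, h2, div_div_div_cancel_right₀ hAne]
  · -- A = 0
    have hArep : A = ∫ x, (Vgen m γ x 0 (j+1) (s+1)).det ∂Q :=
      wgen_eq_integral Q hQsupp m γ hm (s+1) (by omega) 0 (j+1)
    have hgnn : 0 ≤ᵐ[Q] fun x => (Vgen m γ x 0 (j+1) (s+1)).det :=
      haeIcc.mono fun x hx => vgen_det_nonneg m γ hmnn hγ x hx.1 (s+1) 0 (j+1)
    have hgint : Integrable (fun x => (Vgen m γ x 0 (j+1) (s+1)).det) Q :=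
      integrable_of_cont Q hQsupp _ (vgen_det_continuous m γ 0 (j+1) (s+1))
    have hg0 : (fun x => (Vgen m γ x 0 (j+1) (s+1)).det) =ᵐ[Q] 0 :=
      (integral_eq_zero_iff_of_nonneg_ae hgnn hgint).1 (hArep ▸ hA.symm ▸ rfl)
    have hx0 : ∀ᵐ x ∂Q, x = 0 := by
      filter_upwards [haeIcc, hg0] with x hx hgx
      by_contra hxne
      have hxpos : 0 < x := lt_of_le_of_ne hx.1 (Ne.symm hxne)
      have := vgen_det_pos m γ hmnn hγ x hxpos s 0 (j+1)
      simp only [Pi.zero_apply] at hgx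
      linarith
    have hmz : ∀ t, 1 ≤ t → m t = 0 := by
      intro t ht
      rw [hm t]
      rw [integral_congr_ae (g := fun _ => (0:ℝ))
        (hx0.mono fun x hx => by rw [hx]; exact zero_pow (by omega))]
      simp
    have hBz : ∀ t, 1 ≤ t → (Wgen m γ t (j+1) (s+1)).det = 0 := by
      intro t ht
      rw [wgen_eq_integral Q hQsupp m γ hm (s+1) (by omega) t (j+1)]
      rw [integral_congr_ae (g := fun _ => (0:ℝ))
        (hx0.mono fun x hx => by
          rw [hx]
          exact Matrix.det_eq_zero_of_row_eq_zero 0 fun kk => by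
            have hne : ((kk : ℕ) + 1 + t) ≠ 0 := by omega
            simp [Vgen, hne])]
      simp
    simp only [hmz (1+k) (by omega), hmz 1 le_rfl, hmz (k+1) (by omega),
        hmz (1+0) (by omega), hBz (k+1) (by omega), hBz (0+1) (by omega), hBz 1 le_rfl, ← hA]
    simp
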